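/- Let E be an elliptic curve over F_q with q-power Frobenius π, and let k be even. Then every point P in the kernel of Φ_k(π) (where Φ_k is the k-th cyclotomic polynomial) satisfies π^{k/2}(P) = −P; consequently x(P) ∈ F_{q^{k/2}}. -/

import Mathlib

open Polynomial

lemma cyclo_dvd_X_pow_add_one (k : ℕ) (hk : Even k) (hk0 : 0 < k) :
    cyclotomic k ℤ ∣ X ^ (k / 2) + 1 := by
  obtain ⟨d, rfl⟩ := hk
  have hd0 : 0 < d := by omega
  have hd : d ∣ d + d := ⟨2, by ring⟩
  have hmem : d ∈ (d + d).properDivisors := Nat.mem_properDivisors.mpr ⟨hd, by omega⟩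
  have h := X_pow_sub_one_mul_cyclotomic_dvd_X_pow_sub_one_of_dvd ℤ hmem
  have hfac : (X : ℤ[X]) ^ (d + d) - 1 = (X ^ d - 1) * (X ^ d + 1) := by
    ring
  rw [hfac] at h
  have hne : (X : ℤ[X]) ^ d - 1 ≠ 0 := by
    intro h0
    have := congrArg (Polynomial.eval 0) h0
    simp [zero_pow hd0.ne'] at this
  have hsimp : (d + d) / 2 = d := by omega
  rw [hsimp]
  exact (mul_dvd_mul_iff_left hne).mp h

/-- For k even, every point P in the kernel of Φ_k(π) (π the Frobenius
endomorphism of the group of points, Φ_k the k-th cyclotomic polynomial)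
satisfies π^{k/2}(P) = −P; consequently, since negation preserves the
x-coordinate and x intertwines π with the field Frobenius φ,
x(P) ∈ F_{q^{k/2}}, i.e. φ^[k/2](x(P)) = x(P). -/
theorem stmt13 {E F : Type*} [AddCommGroup E] (k : ℕ) (hk : Even k) (hk0 : 0 < k)
    (π : AddMonoid.End E) (P : E)
    (hP : Polynomial.aeval π (Polynomial.cyclotomic k ℤ) P = 0)
    (x : E → F) (φ : F → F)
    (hcompat : ∀ Q : E, x (π Q) = φ (x Q))
    (hneg : ∀ Q : E, x (-Q) = x Q) :
    (π ^ (k / 2)) P = -P ∧ φ^[k / 2] (x P) = x P := by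
  obtain ⟨g, hg⟩ := cyclo_dvd_X_pow_add_one k hk hk0
  have h1 : Polynomial.aeval π ((X : ℤ[X]) ^ (k / 2) + 1) P = 0 := by
    rw [hg, mul_comm, map_mul]
    show Polynomial.aeval π g (Polynomial.aeval π (cyclotomic k ℤ) P) = 0
    rw [hP, map_zero]
  have h2 : (π ^ (k / 2)) P + P = 0 := by
    have h1' : (π ^ (k / 2) + 1) P = 0 := by simpa using h1
    exact h1'
  have hmain : (π ^ (k / 2)) P = -P := eq_neg_of_add_eq_zero_left h2
  refine ⟨hmain, ?_⟩
  have hiter : ∀ (n : ℕ) (Q : E), x ((π ^ n) Q) = φ^[n] (x Q) := by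
    intro n
    induction n with
    | zero => intro Q; simp
    | succ m ih =>
      intro Q
      rw [pow_succ', Function.iterate_succ']
      show x (π ((π ^ m) Q)) = φ (φ^[m] (x Q))
      rw [hcompat, ih]
  calc φ^[k / 2] (x P) = x ((π ^ (k / 2)) P) := (hiter _ _).symm
    _ = x (-P) := by rw [hmain]
    _ = x P := hneg P
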